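/- Let m ≥ 3, let g be an invertible symmetric m×m complex matrix, let C(1),…,C(m) be m×m complex matrices such that the first row of C(j) is the j-th standard basis vector (C(j)_{1q} = δ_{jq} for all q), and let W(1),…,W(m) be diagonal m×m complex matrices satisfying: (a) C(j)·W(k) − W(k)·C(j) = C(k)·W(j) − W(j)·C(k) for all j, k, and (b) W(k)·g + g·W(k)ᵀ = 0 for all k. Then W(k) = 0 for all k. -/

import Mathlib

/-!
Statement 15 (algebraic core of Corollary `connections2` of the paper):
m ≥ 3, g invertible symmetric, C(1),…,C(m) matrices whose first row is the
corresponding standard basis vector (C(j)_{1q} = δ_{jq}), and W(1),…,W(m)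
diagonal matrices with (a) [C(j), W(k)] = [C(k), W(j)] for all j,k and
(b) W(k)·g + g·W(k)ᵀ = 0 for all k.  Then W(k) = 0 for all k.
-/

open Matrix

theorem stmt15 {m : ℕ} (hm : 3 ≤ m)
    (g : Matrix (Fin m) (Fin m) ℂ) (hg_inv : IsUnit g) (hg_symm : gᵀ = g)
    (C W : Fin m → Matrix (Fin m) (Fin m) ℂ)
    (hC : ∀ j q : Fin m, C j ⟨0, by omega⟩ q = if j = q then 1 else 0)
    (hW : ∀ k, (W k).IsDiag)
    (ha : ∀ j k, C j * W k - W k * C j = C k * W j - W j * C k)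
    (hb : ∀ k, W k * g + g * (W k)ᵀ = 0) :
    ∀ k, W k = 0 := by
  have hinj : Function.Injective g.mulVec := mulVec_injective_iff_isUnit.mpr hg_inv
  have hcol : ∀ a : Fin m, ∃ i, g i a ≠ 0 := by
    intro a
    by_contra h
    push_neg at h
    have h0 : g *ᵥ (Pi.single a 1) = g *ᵥ (0 : Fin m → ℂ) := by
      rw [mulVec_single, mulVec_zero]
      funext i; simp [h i]
    have := congrFun (hinj h0) a
    simp at this
  set z : Fin m := ⟨0, by omega⟩ with hz
  intro k
  have h1 : ∀ j : Fin m, j ≠ k → W k j j = W k z z := by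
    intro j hjk
    have := congrFun (congrFun (ha j k) z) j
    simp only [Matrix.sub_apply, Matrix.mul_apply] at this
    rw [Finset.sum_eq_single j (fun b _ hb => by rw [hW k hb, mul_zero]) (by simp),
        Finset.sum_eq_single z (fun b _ hb => by rw [hW k (Ne.symm hb), zero_mul]) (by simp),
        Finset.sum_eq_single j (fun b _ hb => by rw [hW j hb, mul_zero]) (by simp),
        Finset.sum_eq_single z (fun b _ hb => by rw [hW j (Ne.symm hb), zero_mul]) (by simp)]
      at this
    simp only [hC, if_pos rfl, if_true, if_neg (show k ≠ j from Ne.symm hjk), one_mul, mul_one,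
      zero_mul, mul_zero, sub_zero] at this
    linear_combination this
  have h2 : ∀ i j : Fin m, (W k i i + W k j j) * g i j = 0 := by
    intro i j
    have := congrFun (congrFun (hb k) i) j
    simp only [Matrix.add_apply, Matrix.mul_apply, Matrix.transpose_apply,
      Matrix.zero_apply] at this
    rw [Finset.sum_eq_single i (fun b _ hb => by rw [hW k (Ne.symm hb), zero_mul]) (by simp),
        Finset.sum_eq_single j (fun b _ hb => by rw [hW k (Ne.symm hb), mul_zero]) (by simp)]
      at this
    linear_combination this
  have hc : W k z z = 0 := by
    by_contra hc
    have hzero : ∀ i j : Fin m, i ≠ k → j ≠ k → g i j = 0 := by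
      intro i j hi hj
      have h := h2 i j
      rw [h1 i hi, h1 j hj] at h
      rcases mul_eq_zero.mp h with h | h
      · exfalso
        apply hc
        have h2' : (2 : ℂ) * W k z z = 0 := by linear_combination h
        simpa using h2'
      · exact h
    obtain ⟨a, b, hab, hak, hbk⟩ : ∃ a b : Fin m, a ≠ b ∧ a ≠ k ∧ b ≠ k := by
      rcases eq_or_ne k ⟨0, by omega⟩ with rfl | h0
      · exact ⟨⟨1, by omega⟩, ⟨2, by omega⟩, by simp [Fin.ext_iff], by simp [Fin.ext_iff],
          by simp [Fin.ext_iff]⟩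
      · rcases eq_or_ne k ⟨1, by omega⟩ with rfl | h1
        · exact ⟨⟨0, by omega⟩, ⟨2, by omega⟩, by simp [Fin.ext_iff], by simp [Fin.ext_iff],
            by simp [Fin.ext_iff]⟩
        · exact ⟨⟨0, by omega⟩, ⟨1, by omega⟩, by simp [Fin.ext_iff], Ne.symm h0, Ne.symm h1⟩
    by_cases hka : g k a = 0
    · obtain ⟨i, hi⟩ := hcol a
      rcases eq_or_ne i k with rfl | hik
      · exact hi hka
      · exact hi (hzero i a hik hak)
    by_cases hkb : g k b = 0
    · obtain ⟨i, hi⟩ := hcol b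
      rcases eq_or_ne i k with rfl | hik
      · exact hi hkb
      · exact hi (hzero i b hik hbk)
    set v : Fin m → ℂ := g k b • (Pi.single a 1 : Fin m → ℂ) - g k a • (Pi.single b 1 : Fin m → ℂ) with hv
    have hgv : g *ᵥ v = g *ᵥ 0 := by
      rw [hv, mulVec_sub, mulVec_smul, mulVec_smul, mulVec_single, mulVec_single, mulVec_zero]
      funext i
      simp only [Pi.sub_apply, Pi.smul_apply, smul_eq_mul, Pi.zero_apply, mul_one,
        MulOpposite.op_one, one_smul, Matrix.col_apply]
      rcases eq_or_ne i k with rfl | hik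
      · ring
      · rw [hzero i a hik hak, hzero i b hik hbk]; ring
    have hva := congrFun (hinj hgv) a
    rw [hv] at hva
    simp [Pi.single_apply, hab, Ne.symm hab] at hva
    exact hkb hva
  have hoff : ∀ j : Fin m, j ≠ k → W k j j = 0 := fun j hj => (h1 j hj).trans hc
  have hkk : W k k k = 0 := by
    obtain ⟨i, hi⟩ := hcol k
    have hik : g k i ≠ 0 := by
      rw [← hg_symm]; simpa using hi
    have h := h2 k i
    by_cases hik' : i = k
    · rw [hik'] at h hik
      rcases mul_eq_zero.mp h with h | h
      · have h2' : (2 : ℂ) * W k k k = 0 := by linear_combination h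
        simpa using h2'
      · exact absurd h hik
    · rw [hoff i hik'] at h
      rcases mul_eq_zero.mp h with h | h
      · linear_combination h
      · exact absurd h hik
  ext i j
  rcases eq_or_ne i j with rfl | hij
  · rcases eq_or_ne i k with rfl | hik
    · simpa using hkk
    · simpa using hoff i hik
  · simpa using hW k hij
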